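/- Let A be an n×n real matrix with A_{ii}=1 and |A_{ij}| ≤ 1, let ε₁,…,εₙ be independent mean-zero real random variables with variance σ² and fourth moments bounded by c₃, and let L = diag(ε) A diag(ε). Suppose the rows of the n×p matrix X are uniformly bounded in norm by c₄ and XᵀX/n → Σ as n → ∞, and that (1/n²)·Σ_{k≠l} A_{kl}² → 0. Then XᵀLX/n → σ²Σ in L² (each entry converges in mean square), and hence in probability. -/

import Mathlib

open Matrix MeasureTheory ProbabilityTheory Filter
open scoped ENNReal

section Aux
variable {Ω : Type*} [MeasurableSpace Ω] {μ : Measure Ω} [IsProbabilityMeasure μ]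

lemma my_memLp_mul {f g : Ω → ℝ} {a b c : ℝ≥0∞} (hf : MemLp f a μ) (hg : MemLp g b μ)
    (h : 1/c = 1/a + 1/b) : MemLp (fun ω => f ω * g ω) c μ := by
  haveI : ENNReal.HolderTriple a b c := ⟨by simpa only [one_div] using h.symm⟩
  have := MemLp.smul (φ := f) (f := g) (p := a) (q := b) (r := c) hg hf
  exact this

lemma my_integral_prod_pow {n : ℕ} {ε : Fin n → Ω → ℝ}
    (hm : ∀ i, Measurable (ε i))
    (hind : iIndepFun ε μ)
    (c : Fin n → ℕ) (s : Finset (Fin n)) :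
    ∫ ω, ∏ i ∈ s, ε i ω ^ c i ∂μ = ∏ i ∈ s, ∫ ω, ε i ω ^ c i ∂μ := by
  classical
  induction s using Finset.induction with
  | empty => simp
  | @insert a s ha ih =>
    have hfind : iIndepFun
        (fun i => (fun x : ℝ => x ^ c i) ∘ ε i) μ :=
      hind.comp _ (fun i => measurable_id.pow_const (c i))
    have hFeq : (∏ j ∈ s, fun ω => ε j ω ^ c j) = fun ω => ∏ i ∈ s, ε i ω ^ c i := by
      funext ω; simp
    have hdep : IndepFun (∏ j ∈ s, fun ω => ε j ω ^ c j) (fun ω => ε a ω ^ c a) μ :=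
      hfind.indepFun_finsetProd_of_notMem
        (fun i => (hm i).pow_const (c i)) ha
    have hprodmeas : AEStronglyMeasurable (∏ j ∈ s, fun ω => ε j ω ^ c j) μ := by
      rw [hFeq]
      exact (Finset.measurable_prod _ (fun i _ => (hm i).pow_const (c i))).aestronglyMeasurable
    have key := hdep.integral_mul_eq_mul_integral hprodmeas
      ((hm a).pow_const (c a)).aestronglyMeasurable
    rw [hFeq] at key
    have h2 : ((fun ω => ∏ i ∈ s, ε i ω ^ c i) * fun ω => ε a ω ^ c a)
        = fun ω => (∏ i ∈ s, ε i ω ^ c i) * ε a ω ^ c a := rfl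
    rw [h2] at key
    have hins : (fun ω => ∏ i ∈ insert a s, ε i ω ^ c i)
        = fun ω => (∏ i ∈ s, ε i ω ^ c i) * ε a ω ^ c a := by
      funext ω; rw [Finset.prod_insert ha, mul_comm]
    calc ∫ ω, ∏ i ∈ insert a s, ε i ω ^ c i ∂μ
        = ∫ ω, (∏ i ∈ s, ε i ω ^ c i) * ε a ω ^ c a ∂μ := by rw [← hins]
      _ = (∫ ω, ∏ i ∈ s, ε i ω ^ c i ∂μ) * ∫ ω, ε a ω ^ c a ∂μ := key
      _ = ∏ i ∈ insert a s, ∫ ω, ε i ω ^ c i ∂μ := by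
          rw [Finset.prod_insert ha, ih, mul_comm]

lemma my_D_bound {n : ℕ} {ε : Fin n → Ω → ℝ} {σ2 c3 : ℝ}
    (hm : ∀ i, Measurable (ε i))
    (hind : iIndepFun ε μ)
    (hmean : ∀ i, ∫ ω, ε i ω ∂μ = 0)
    (hvar : ∀ i, ∫ ω, (ε i ω) ^ 2 ∂μ = σ2)
    (hmom4 : ∀ i, ∫ ω, (ε i ω) ^ 4 ∂μ ≤ c3)
    (hc3 : 0 ≤ c3) (hσ : 0 ≤ σ2)
    (i k i' k' : Fin n) :
    |(∫ ω, (ε i ω * ε k ω) * (ε i' ω * ε k' ω) ∂μ)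
      - (if i = k then σ2 else 0) * (if i' = k' then σ2 else 0)|
      ≤ (c3 + σ2^2) * ((if i = i' ∧ k = k' then 1 else 0) + (if i = k' ∧ k = i' then 1 else 0)) := by
  classical
  set cnt : Fin n → ℕ := fun t =>
    (if t = i then 1 else 0) + (if t = k then 1 else 0)
    + (if t = i' then 1 else 0) + (if t = k' then 1 else 0) with hcnt
  set g : Fin n → ℝ := fun t => ∫ ω, ε t ω ^ cnt t ∂μ with hg
  have hpt : ∀ ω, (ε i ω * ε k ω) * (ε i' ω * ε k' ω) = ∏ t, ε t ω ^ cnt t := by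
    intro ω
    simp only [hcnt, pow_add, Finset.prod_mul_distrib]
    simp [pow_ite, Finset.prod_ite_eq', mul_assoc]
  have hI : (∫ ω, (ε i ω * ε k ω) * (ε i' ω * ε k' ω) ∂μ) = ∏ t, g t := by
    rw [show (fun ω => (ε i ω * ε k ω) * (ε i' ω * ε k' ω))
        = fun ω => ∏ t, ε t ω ^ cnt t from funext hpt]
    exact my_integral_prod_pow hm hind cnt Finset.univ
  have hg0 : ∀ t, cnt t = 0 → g t = 1 := by
    intro t ht; simp [hg, ht]
  have hg1 : ∀ t, cnt t = 1 → g t = 0 := by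
    intro t ht; simp only [hg, ht, pow_one]; exact hmean t
  have hg2 : ∀ t, cnt t = 2 → g t = σ2 := by
    intro t ht; simp only [hg, ht]; exact hvar t
  -- helper for products supported on two distinct points
  have hpair : ∀ a b : Fin n, a ≠ b → (∀ t, t ≠ a → t ≠ b → g t = 1) →
      ∏ t, g t = g a * g b := by
    intro a b hab hother
    rw [← Finset.mul_prod_erase Finset.univ g (Finset.mem_univ a),
      ← Finset.mul_prod_erase (Finset.univ.erase a) g
        (Finset.mem_erase.2 ⟨Ne.symm hab, Finset.mem_univ b⟩)]
    have hone : ∏ t ∈ (Finset.univ.erase a).erase b, g t = 1 := by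
      apply Finset.prod_eq_one
      intro t ht
      simp only [Finset.mem_erase] at ht
      exact hother t ht.2.1 ht.1
    rw [hone, mul_one]
  by_cases h1 : i = i' ∧ k = k'
  · obtain ⟨h1a, h1b⟩ := h1
    subst h1a; subst h1b
    by_cases hik : i = k
    · subst hik
      have hprod : ∏ t, g t = ∫ ω, ε i ω ^ 4 ∂μ := by
        rw [Finset.prod_eq_single i (fun t _ ht => hg0 t (by simp [hcnt, ht]))
          (by simp)]
        have h4 : cnt i = 4 := by simp [hcnt]
        simp [hg, h4]
      rw [hI, hprod]
      have hM4l : (0:ℝ) ≤ ∫ ω, ε i ω ^ 4 ∂μ :=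
        integral_nonneg (fun ω => by positivity)
      have hM4u := hmom4 i
      simp only [eq_self_iff_true, and_self, if_true]
      rw [abs_le]
      constructor <;> nlinarith [sq_nonneg σ2]
    · have hc2i : cnt i = 2 := by simp [hcnt, hik]
      have hc2k : cnt k = 2 := by simp [hcnt, Ne.symm hik]
      have hprod : ∏ t, g t = σ2 * σ2 := by
        rw [hpair i k hik (fun t hti htk => hg0 t (by simp [hcnt, hti, htk])),
          hg2 i hc2i, hg2 k hc2k]
      rw [hI, hprod]
      simp only [if_neg hik, eq_self_iff_true, and_self, if_true,
        if_neg (show ¬(i = k ∧ k = i) from fun h => hik h.1)]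
      rw [abs_le]
      constructor <;> nlinarith [sq_nonneg σ2]
  · by_cases h2 : i = k' ∧ k = i'
    · obtain ⟨h2a, h2b⟩ := h2
      subst h2a; subst h2b
      have hik : i ≠ k := fun h => h1 ⟨h, h.symm⟩
      have hc2i : cnt i = 2 := by simp [hcnt, hik]
      have hc2k : cnt k = 2 := by simp [hcnt, Ne.symm hik]
      have hprod : ∏ t, g t = σ2 * σ2 := by
        rw [hpair i k hik (fun t hti htk => hg0 t (by simp [hcnt, hti, htk])),
          hg2 i hc2i, hg2 k hc2k]
      rw [hI, hprod]
      simp only [if_neg hik, if_neg (Ne.symm hik), if_neg h1, eq_self_iff_true, and_self, if_true]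
      rw [abs_le]
      constructor <;> nlinarith [sq_nonneg σ2]
    · by_cases h3 : i = k ∧ i' = k'
      · obtain ⟨h3a, h3b⟩ := h3
        subst h3a; subst h3b
        have hii' : i ≠ i' := fun h => h1 ⟨h, h⟩
        have hc2i : cnt i = 2 := by simp [hcnt, hii']
        have hc2k : cnt i' = 2 := by simp [hcnt, Ne.symm hii']
        have hprod : ∏ t, g t = σ2 * σ2 := by
          rw [hpair i i' hii' (fun t hti htk => hg0 t (by simp [hcnt, hti, htk])),
            hg2 i hc2i, hg2 i' hc2k]
        rw [hI, hprod]
        simp [hii']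
      · -- zero case
        have hw : ∃ t, cnt t = 1 := by
          by_cases hik : i = k
          · have hi'k' : i' ≠ k' := fun h => h3 ⟨hik, h⟩
            by_cases hii' : i' = i
            · refine ⟨k', ?_⟩
              have e1 : k' ≠ i := fun h => h2 ⟨h.symm, by rw [← hik, hii']⟩
              have e2 : k' ≠ k := by rw [← hik]; exact e1
              have e3 : k' ≠ i' := Ne.symm hi'k'
              simp [hcnt, e1, e2, e3]
            · refine ⟨i', ?_⟩
              have e2 : i' ≠ k := by rw [← hik]; exact hii'
              simp [hcnt, hii', e2, hi'k']
          · by_cases hii' : i = i'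
            · have hkk' : k ≠ k' := fun h => h1 ⟨hii', h⟩
              refine ⟨k, ?_⟩
              have e1 : k ≠ i := Ne.symm hik
              have e2 : k ≠ i' := by rw [← hii']; exact e1
              simp [hcnt, e1, e2, hkk']
            · by_cases hik' : i = k'
              · have hki' : k ≠ i' := fun h => h2 ⟨hik', h⟩
                refine ⟨k, ?_⟩
                have e1 : k ≠ i := Ne.symm hik
                have e3 : k ≠ k' := by rw [← hik']; exact e1
                simp [hcnt, e1, hki', e3]
              · refine ⟨i, ?_⟩
                simp [hcnt, hik, hii', hik']
        obtain ⟨t, ht⟩ := hw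
        have hprod : ∏ t, g t = 0 :=
          Finset.prod_eq_zero (Finset.mem_univ t) (hg1 t ht)
        have hJ0 : (if i = k then σ2 else 0) * (if i' = k' then σ2 else 0) = 0 := by
          by_cases hik : i = k
          · have : i' ≠ k' := fun h => h3 ⟨hik, h⟩
            simp [this]
          · simp [hik]
        rw [hI, hprod, hJ0]
        simp [h1, h2]

end Aux

set_option maxHeartbeats 2000000 in
theorem stmt16 {Ω : Type*} [MeasurableSpace Ω] (μ : Measure Ω) [IsProbabilityMeasure μ]
    {p : ℕ} (σ2 c3 c4 : ℝ) (hσ : 0 < σ2)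
    (Sig : Matrix (Fin p) (Fin p) ℝ)
    (X : (n : ℕ) → Matrix (Fin n) (Fin p) ℝ)
    (A : (n : ℕ) → Matrix (Fin n) (Fin n) ℝ)
    (ε : (n : ℕ) → Fin n → Ω → ℝ)
    (hmeas : ∀ n i, Measurable (ε n i))
    (hindep : ∀ n, iIndepFun (ε n) μ)
    (hL4 : ∀ n i, MemLp (ε n i) 4 μ)
    (hmean : ∀ n i, ∫ ω, ε n i ω ∂μ = 0)
    (hvar : ∀ n i, ∫ ω, (ε n i ω) ^ 2 ∂μ = σ2)
    (hmom4 : ∀ n i, ∫ ω, (ε n i ω) ^ 4 ∂μ ≤ c3)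
    (hrow : ∀ n i, ∑ j, (X n i j) ^ 2 ≤ c4 ^ 2)
    (hXX : ∀ j j', Tendsto (fun n : ℕ => (1 / (n : ℝ)) * ∑ i, X n i j * X n i j')
      atTop (nhds (Sig j j')))
    (hAdiag : ∀ n (i : Fin n), A n i i = 1)
    (hAbd : ∀ n (i i' : Fin n), |A n i i'| ≤ 1)
    (hAoff : Tendsto (fun n : ℕ =>
        (1 / (n : ℝ) ^ 2) * ∑ i : Fin n, ∑ i' : Fin n,
          (if i = i' then (0 : ℝ) else (A n i i') ^ 2))
      atTop (nhds 0)) :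
    ∀ j j',
      Tendsto (fun n : ℕ =>
          ∫ ω, ((1 / (n : ℝ)) * (∑ i : Fin n, ∑ i' : Fin n,
            X n i j * (A n i i' * ε n i ω * ε n i' ω) * X n i' j')
            - σ2 * Sig j j') ^ 2 ∂μ)
        atTop (nhds 0) ∧
      ∀ δ > (0 : ℝ),
        Tendsto (fun n : ℕ =>
            μ {ω | δ ≤ |(1 / (n : ℝ)) * (∑ i : Fin n, ∑ i' : Fin n,
              X n i j * (A n i i' * ε n i ω * ε n i' ω) * X n i' j')
              - σ2 * Sig j j'|})
          atTop (nhds 0) := by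
  classical
  intro j j'
  have hc3 : (0:ℝ) ≤ c3 :=
    le_trans (integral_nonneg (fun ω => by positivity)) (hmom4 1 0)
  have hσ2 : (0:ℝ) ≤ σ2 := hσ.le
  -- the quadratic form written over pairs
  set S : (n : ℕ) → Ω → ℝ := fun n ω => ∑ q : Fin n × Fin n,
    (X n q.1 j * A n q.1 q.2 * X n q.2 j') * (ε n q.1 ω * ε n q.2 ω) with hS
  have hrw : ∀ (n : ℕ) (ω : Ω), (∑ i : Fin n, ∑ i' : Fin n,
      X n i j * (A n i i' * ε n i ω * ε n i' ω) * X n i' j') = S n ω := by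
    intro n ω
    rw [hS]; dsimp only; rw [Fintype.sum_prod_type]
    exact Finset.sum_congr rfl fun i _ => Finset.sum_congr rfl fun k _ => by ring
  -- exponents arithmetic
  have h24 : (1:ℝ≥0∞)/2 = 1/4 + 1/4 := by
    rw [ENNReal.div_add_div_same, ENNReal.div_eq_div_iff] <;> norm_num
  have h12 : (1:ℝ≥0∞)/1 = 1/2 + 1/2 := by
    rw [ENNReal.div_add_div_same, ENNReal.div_eq_div_iff] <;> norm_num
  -- moment facts
  have hpairmem : ∀ (n : ℕ) (a b : Fin n),
      MemLp (fun ω => ε n a ω * ε n b ω) 2 μ :=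
    fun n a b => my_memLp_mul (hL4 n a) (hL4 n b) h24
  have hint2 : ∀ (n : ℕ) (a b : Fin n),
      Integrable (fun ω => ε n a ω * ε n b ω) μ :=
    fun n a b => (hpairmem n a b).integrable one_le_two
  have hint4 : ∀ (n : ℕ) (a b a' b' : Fin n),
      Integrable (fun ω => (ε n a ω * ε n b ω) * (ε n a' ω * ε n b' ω)) μ := by
    intro n a b a' b'
    have := my_memLp_mul (hpairmem n a b) (hpairmem n a' b') h12
    exact memLp_one_iff_integrable.mp (by simpa using this)
  have hpair : ∀ (n : ℕ) (a b : Fin n),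
      (∫ ω, ε n a ω * ε n b ω ∂μ) = if a = b then σ2 else 0 := by
    intro n a b
    by_cases hab : a = b
    · subst hab
      rw [if_pos rfl, show (fun ω => ε n a ω * ε n a ω) = fun ω => ε n a ω ^ 2 from
        funext fun ω => (sq _).symm]
      exact hvar n a
    · rw [if_neg hab]
      have h := ((hindep n).indepFun hab).integral_fun_mul_eq_mul_integral
        (hmeas n a).aestronglyMeasurable (hmeas n b).aestronglyMeasurable
      rw [h, hmean n a, hmean n b, mul_zero]
  have hSmem : ∀ n, MemLp (S n) 2 μ := by
    intro n
    have := memLp_finset_sum (μ := μ) (p := 2) Finset.univ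
      (f := fun (q : Fin n × Fin n) => fun ω =>
        (X n q.1 j * A n q.1 q.2 * X n q.2 j') * (ε n q.1 ω * ε n q.2 ω))
      (fun q _ => ((hpairmem n q.1 q.2).const_mul _))
    simpa [hS] using this
  have hSint : ∀ n, Integrable (S n) μ := fun n => (hSmem n).integrable one_le_two
  have hS2int : ∀ n, Integrable (fun ω => (S n ω)^2) μ := by
    intro n
    have := my_memLp_mul (hSmem n) (hSmem n) h12
    have h2 := memLp_one_iff_integrable.mp (by simpa using this)
    exact h2.congr (Eventually.of_forall fun ω => (sq _).symm)
  -- mean of S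
  have hmeanJ : ∀ n, (∫ ω, S n ω ∂μ) = ∑ q : Fin n × Fin n,
      (X n q.1 j * A n q.1 q.2 * X n q.2 j') * (if q.1 = q.2 then σ2 else 0) := by
    intro n
    rw [hS]; dsimp only
    rw [integral_finset_sum _ (fun (q : Fin n × Fin n) _ => (hint2 n q.1 q.2).const_mul _)]
    exact Finset.sum_congr rfl fun q _ => by rw [integral_const_mul, hpair n q.1 q.2]
  have hmeanS : ∀ n, (∫ ω, S n ω ∂μ) = σ2 * ∑ i, X n i j * X n i j' := by
    intro n
    rw [hmeanJ n, Fintype.sum_prod_type]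
    dsimp only
    have h2 : ∀ i : Fin n, (∑ k : Fin n,
        (X n i j * A n i k * X n k j') * (if i = k then σ2 else 0))
        = σ2 * (X n i j * X n i j') := by
      intro i
      have hterm : ∀ k : Fin n, (X n i j * A n i k * X n k j') * (if i = k then σ2 else 0)
          = if i = k then (X n i j * A n i k * X n k j') * σ2 else 0 := by
        intro k; by_cases h : i = k <;> simp [h]
      simp_rw [hterm]
      rw [Finset.sum_ite_eq]
      simp only [Finset.mem_univ, if_true, hAdiag n i]
      ring
    simp_rw [h2]
    rw [Finset.mul_sum]
  -- second moment of S
  have hES2 : ∀ n, (∫ ω, (S n ω)^2 ∂μ)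
      = ∑ q : Fin n × Fin n, ∑ r : Fin n × Fin n,
        (X n q.1 j * A n q.1 q.2 * X n q.2 j') * (X n r.1 j * A n r.1 r.2 * X n r.2 j')
          * ∫ ω, (ε n q.1 ω * ε n q.2 ω) * (ε n r.1 ω * ε n r.2 ω) ∂μ := by
    intro n
    have hptw : ∀ ω, (S n ω)^2 = ∑ q : Fin n × Fin n, ∑ r : Fin n × Fin n,
        ((X n q.1 j * A n q.1 q.2 * X n q.2 j') * (X n r.1 j * A n r.1 r.2 * X n r.2 j'))
          * ((ε n q.1 ω * ε n q.2 ω) * (ε n r.1 ω * ε n r.2 ω)) := by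
      intro ω
      rw [hS]; dsimp only
      rw [sq, Finset.sum_mul_sum]
      exact Finset.sum_congr rfl fun q _ => Finset.sum_congr rfl fun r _ => by ring
    simp_rw [hptw]
    rw [integral_finset_sum _ (fun (q : Fin n × Fin n) _ => integrable_finset_sum _
      (fun (r : Fin n × Fin n) _ => (hint4 n q.1 q.2 r.1 r.2).const_mul _))]
    refine Finset.sum_congr rfl fun q _ => ?_
    rw [integral_finset_sum _ (fun (r : Fin n × Fin n) _ => (hint4 n q.1 q.2 r.1 r.2).const_mul _)]
    exact Finset.sum_congr rfl fun r _ => by rw [integral_const_mul]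
  -- variance bound
  set odA : ℕ → ℝ := fun n => ∑ i : Fin n, ∑ i' : Fin n,
    (if i = i' then (0:ℝ) else (A n i i')^2) with hodA
  have hvarb : ∀ n, (∫ ω, (S n ω)^2 ∂μ) - (∫ ω, S n ω ∂μ)^2
      ≤ (c3 + σ2^2) * (2*c4^4*n + 2*c4^4 * odA n) := by
    have hbabs : ∀ n (i k : Fin n), |X n i j * A n i k * X n k j'| ≤ c4^2 * |A n i k| := by
      intro n i k
      have h1 : (X n i j)^2 ≤ c4^2 := le_trans (Finset.single_le_sum
        (f := fun l => (X n i l)^2) (fun l _ => sq_nonneg _) (Finset.mem_univ j)) (hrow n i)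
      have h2 : (X n k j')^2 ≤ c4^2 := le_trans (Finset.single_le_sum
        (f := fun l => (X n k l)^2) (fun l _ => sq_nonneg _) (Finset.mem_univ j')) (hrow n k)
      rw [abs_mul, abs_mul]
      have hx1 : |X n i j| * |X n k j'| ≤ c4^2 := by
        nlinarith [abs_nonneg (X n i j), abs_nonneg (X n k j'),
          sq_abs (X n i j), sq_abs (X n k j')]
      calc |X n i j| * |A n i k| * |X n k j'|
          = (|X n i j| * |X n k j'|) * |A n i k| := by ring
        _ ≤ c4^2 * |A n i k| := mul_le_mul_of_nonneg_right hx1 (abs_nonneg _)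
    intro n
    have hstep : ∀ (q r : Fin n × Fin n),
        (X n q.1 j * A n q.1 q.2 * X n q.2 j') * (X n r.1 j * A n r.1 r.2 * X n r.2 j')
          * (∫ ω, (ε n q.1 ω * ε n q.2 ω) * (ε n r.1 ω * ε n r.2 ω) ∂μ)
        - ((X n q.1 j * A n q.1 q.2 * X n q.2 j') * (if q.1 = q.2 then σ2 else 0))
          * ((X n r.1 j * A n r.1 r.2 * X n r.2 j') * (if r.1 = r.2 then σ2 else 0))
        ≤ (if q = r then (c3+σ2^2) * (|X n q.1 j * A n q.1 q.2 * X n q.2 j'|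
              * |X n r.1 j * A n r.1 r.2 * X n r.2 j'|) else 0)
          + (if (q.2, q.1) = r then (c3+σ2^2) * (|X n q.1 j * A n q.1 q.2 * X n q.2 j'|
              * |X n r.1 j * A n r.1 r.2 * X n r.2 j'|) else 0) := by
      intro q r
      have hD := my_D_bound (hmeas n) (hindep n) (hmean n) (hvar n) (hmom4 n)
        hc3 hσ2 q.1 q.2 r.1 r.2
      have hχ1 : (q.1 = r.1 ∧ q.2 = r.2) ↔ q = r := Prod.ext_iff.symm
      have hχ2 : (q.1 = r.2 ∧ q.2 = r.1) ↔ (q.2, q.1) = r := by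
        rw [Prod.ext_iff]; exact and_comm.trans (by rfl)
      set bq := X n q.1 j * A n q.1 q.2 * X n q.2 j' with hbq
      set br := X n r.1 j * A n r.1 r.2 * X n r.2 j' with hbr
      set Iqr := ∫ ω, (ε n q.1 ω * ε n q.2 ω) * (ε n r.1 ω * ε n r.2 ω) ∂μ with hIqr
      have habs : bq * br * (Iqr - (if q.1 = q.2 then σ2 else 0) * (if r.1 = r.2 then σ2 else 0))
          ≤ (|bq| * |br|) * ((c3 + σ2^2) * ((if q.1 = r.1 ∧ q.2 = r.2 then (1:ℝ) else 0)
            + (if q.1 = r.2 ∧ q.2 = r.1 then 1 else 0))) := by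
        calc bq * br * (Iqr - _) ≤ |bq * br * (Iqr - _)| := le_abs_self _
          _ = |bq| * |br| * |Iqr - _| := by rw [abs_mul, abs_mul]
          _ ≤ (|bq| * |br|) * ((c3 + σ2^2) * _) := by
              exact mul_le_mul_of_nonneg_left hD (mul_nonneg (abs_nonneg _) (abs_nonneg _))
      have hrhs : (|bq| * |br|) * ((c3 + σ2^2) * ((if q.1 = r.1 ∧ q.2 = r.2 then (1:ℝ) else 0)
            + (if q.1 = r.2 ∧ q.2 = r.1 then 1 else 0)))
          = (if q = r then (c3+σ2^2) * (|bq| * |br|) else 0)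
            + (if (q.2, q.1) = r then (c3+σ2^2) * (|bq| * |br|) else 0) := by
        rw [if_congr hχ1 rfl rfl, if_congr hχ2 rfl rfl]
        by_cases h1 : q = r
        · by_cases h2 : (q.2, q.1) = r
          · simp only [if_pos h1, if_pos h2]; ring
          · simp only [if_pos h1, if_neg h2]; ring
        · by_cases h2 : (q.2, q.1) = r
          · simp only [if_neg h1, if_pos h2]; ring
          · simp only [if_neg h1, if_neg h2]; ring
      calc bq * br * Iqr - (bq * (if q.1 = q.2 then σ2 else 0)) * (br * (if r.1 = r.2 then σ2 else 0))
          = bq * br * (Iqr - (if q.1 = q.2 then σ2 else 0) * (if r.1 = r.2 then σ2 else 0)) := by ring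
        _ ≤ _ := habs.trans_eq hrhs
    have hsum1 : (∫ ω, (S n ω)^2 ∂μ) - (∫ ω, S n ω ∂μ)^2
        ≤ ∑ q : Fin n × Fin n, (c3+σ2^2) * ((|X n q.1 j * A n q.1 q.2 * X n q.2 j'|
            * |X n q.1 j * A n q.1 q.2 * X n q.2 j'|)
          + (|X n q.1 j * A n q.1 q.2 * X n q.2 j'|
            * |X n q.2 j * A n q.2 q.1 * X n q.1 j'|)) := by
      rw [hES2 n, hmeanJ n, sq, Finset.sum_mul_sum, ← Finset.sum_sub_distrib]
      simp_rw [← Finset.sum_sub_distrib]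
      refine Finset.sum_le_sum fun q _ => ?_
      calc (∑ r : Fin n × Fin n, _) ≤ ∑ r : Fin n × Fin n,
          ((if q = r then (c3+σ2^2) * (|X n q.1 j * A n q.1 q.2 * X n q.2 j'|
              * |X n r.1 j * A n r.1 r.2 * X n r.2 j'|) else 0)
            + (if (q.2, q.1) = r then (c3+σ2^2) * (|X n q.1 j * A n q.1 q.2 * X n q.2 j'|
              * |X n r.1 j * A n r.1 r.2 * X n r.2 j'|) else 0)) :=
          Finset.sum_le_sum fun r _ => hstep q r
        _ = _ := by
          rw [Finset.sum_add_distrib, Finset.sum_ite_eq, Finset.sum_ite_eq]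
          simp only [Finset.mem_univ, if_true]
          ring
    refine hsum1.trans ?_
    have hrw2 : (∑ q : Fin n × Fin n, (c3+σ2^2) * ((|X n q.1 j * A n q.1 q.2 * X n q.2 j'|
            * |X n q.1 j * A n q.1 q.2 * X n q.2 j'|)
          + (|X n q.1 j * A n q.1 q.2 * X n q.2 j'|
            * |X n q.2 j * A n q.2 q.1 * X n q.1 j'|)))
        = (c3+σ2^2) * ∑ q : Fin n × Fin n, ((|X n q.1 j * A n q.1 q.2 * X n q.2 j'|
            * |X n q.1 j * A n q.1 q.2 * X n q.2 j'|)
          + (|X n q.1 j * A n q.1 q.2 * X n q.2 j'|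
            * |X n q.2 j * A n q.2 q.1 * X n q.1 j'|)) := by
      rw [Finset.mul_sum]
    rw [hrw2]
    have hc3σ : (0:ℝ) ≤ c3 + σ2^2 := by positivity
    refine mul_le_mul_of_nonneg_left ?_ hc3σ
    have hperq : ∀ q : Fin n × Fin n, (|X n q.1 j * A n q.1 q.2 * X n q.2 j'|
            * |X n q.1 j * A n q.1 q.2 * X n q.2 j'|)
          + (|X n q.1 j * A n q.1 q.2 * X n q.2 j'|
            * |X n q.2 j * A n q.2 q.1 * X n q.1 j'|)
        ≤ c4^4 * (A n q.1 q.2)^2 + c4^4 * (|A n q.1 q.2| * |A n q.2 q.1|) := by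
      intro q
      have h1 := hbabs n q.1 q.2
      have h2 := hbabs n q.2 q.1
      have ha1 : (0:ℝ) ≤ |X n q.1 j * A n q.1 q.2 * X n q.2 j'| := abs_nonneg _
      have ha2 : (0:ℝ) ≤ |X n q.2 j * A n q.2 q.1 * X n q.1 j'| := abs_nonneg _
      have hA1 : (0:ℝ) ≤ |A n q.1 q.2| := abs_nonneg _
      have hA2 : (0:ℝ) ≤ |A n q.2 q.1| := abs_nonneg _
      have hsq : c4^2 * |A n q.1 q.2| * (c4^2 * |A n q.1 q.2|) = c4^4 * (A n q.1 q.2)^2 := by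
        rw [← sq_abs (A n q.1 q.2)]; ring
      have hsw : c4^2 * |A n q.1 q.2| * (c4^2 * |A n q.2 q.1|)
          = c4^4 * (|A n q.1 q.2| * |A n q.2 q.1|) := by ring
      nlinarith [mul_le_mul h1 h1 ha1 (by positivity : (0:ℝ) ≤ c4^2 * |A n q.1 q.2|),
        mul_le_mul h1 h2 ha2 (by positivity : (0:ℝ) ≤ c4^2 * |A n q.1 q.2|)]
    refine (Finset.sum_le_sum fun q _ => hperq q).trans ?_
    rw [Fintype.sum_prod_type]
    dsimp only
    have hper : ∀ i k : Fin n, c4^4*(A n i k)^2 + c4^4*(|A n i k| * |A n k i|)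
        ≤ (if i = k then 2*c4^4 else 0) + (3/2*c4^4) * (if i = k then (0:ℝ) else (A n i k)^2)
          + (c4^4/2) * (if i = k then (0:ℝ) else (A n k i)^2) := by
      intro i k
      have hA2 : (A n i k)^2 ≤ 1 := by
        nlinarith [hAbd n i k, abs_nonneg (A n i k), sq_abs (A n i k)]
      have hA2' : (A n k i)^2 ≤ 1 := by
        nlinarith [hAbd n k i, abs_nonneg (A n k i), sq_abs (A n k i)]
      have hc4 : (0:ℝ) ≤ c4^4 := by positivity
      by_cases h : i = k
      · subst h
        simp only [eq_self_iff_true, if_true]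
        have habs2 : |A n i i| * |A n i i| = (A n i i)^2 := by
          rw [abs_mul_abs_self, sq]
        rw [habs2]
        nlinarith [mul_le_mul_of_nonneg_left hA2 hc4]
      · simp only [if_neg h]
        have hab : |A n i k| * |A n k i| ≤ ((A n i k)^2 + (A n k i)^2)/2 := by
          nlinarith [sq_nonneg (|A n i k| - |A n k i|), sq_abs (A n i k), sq_abs (A n k i)]
        nlinarith [mul_le_mul_of_nonneg_left hab hc4]
    refine (Finset.sum_le_sum fun i _ => Finset.sum_le_sum fun k _ => hper i k).trans ?_
    have hs1 : (∑ i : Fin n, ∑ k : Fin n, (if i = k then 2*c4^4 else (0:ℝ)))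
        = 2*c4^4*n := by
      have : ∀ i : Fin n, (∑ k : Fin n, (if i = k then 2*c4^4 else (0:ℝ))) = 2*c4^4 := by
        intro i
        rw [Finset.sum_ite_eq]
        simp
      simp_rw [this]
      rw [Finset.sum_const, Finset.card_univ, Fintype.card_fin, nsmul_eq_mul]
      ring
    have hs3 : (∑ i : Fin n, ∑ k : Fin n, (if i = k then (0:ℝ) else (A n k i)^2)) = odA n := by
      rw [Finset.sum_comm, hodA]
      exact Finset.sum_congr rfl fun k _ => Finset.sum_congr rfl fun i _ =>
        if_congr eq_comm rfl rfl
    have hsplit : (∑ i : Fin n, ∑ k : Fin n, ((if i = k then 2*c4^4 else (0:ℝ))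
        + (3/2*c4^4) * (if i = k then (0:ℝ) else (A n i k)^2)
        + (c4^4/2) * (if i = k then (0:ℝ) else (A n k i)^2)))
        = (∑ i : Fin n, ∑ k : Fin n, (if i = k then 2*c4^4 else (0:ℝ)))
          + (3/2*c4^4) * (∑ i : Fin n, ∑ k : Fin n, (if i = k then (0:ℝ) else (A n i k)^2))
          + (c4^4/2) * (∑ i : Fin n, ∑ k : Fin n, (if i = k then (0:ℝ) else (A n k i)^2)) := by
      rw [Finset.mul_sum, Finset.mul_sum, ← Finset.sum_add_distrib, ← Finset.sum_add_distrib]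
      refine Finset.sum_congr rfl fun i _ => ?_
      rw [Finset.mul_sum, Finset.mul_sum, ← Finset.sum_add_distrib, ← Finset.sum_add_distrib]
    rw [hsplit, hs1, hs3, hodA]
    have hodnn : (0:ℝ) ≤ ∑ i : Fin n, ∑ i' : Fin n, (if i = i' then (0:ℝ) else (A n i i')^2) := by
      refine Finset.sum_nonneg fun i _ => Finset.sum_nonneg fun k _ => ?_
      by_cases h : i = k <;> simp [h, sq_nonneg]
    nlinarith [hodnn]
  -- exact decomposition of the L² distance
  have key : ∀ n : ℕ, (∫ ω, ((1/(n:ℝ)) * S n ω - σ2 * Sig j j')^2 ∂μ)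
      = (1/(n:ℝ))^2 * ((∫ ω, (S n ω)^2 ∂μ) - (∫ ω, S n ω ∂μ)^2)
        + ((1/(n:ℝ)) * (∫ ω, S n ω ∂μ) - σ2 * Sig j j')^2 := by
    intro n
    have hptw : (fun ω => ((1/(n:ℝ)) * S n ω - σ2 * Sig j j')^2)
        = fun ω => (1/(n:ℝ))^2 * (S n ω)^2
          - (2 * (σ2 * Sig j j') * (1/(n:ℝ))) * S n ω + (σ2 * Sig j j')^2 := by
      funext ω; ring
    have hIa : Integrable (fun ω => (1/(n:ℝ))^2 * (S n ω)^2) μ := (hS2int n).const_mul _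
    have hIb : Integrable (fun ω => (2 * (σ2 * Sig j j') * (1/(n:ℝ))) * S n ω) μ :=
      (hSint n).const_mul _
    have hIc : Integrable (fun ω => (1/(n:ℝ))^2 * (S n ω)^2
        - (2 * (σ2 * Sig j j') * (1/(n:ℝ))) * S n ω) μ := hIa.sub hIb
    rw [hptw, integral_add hIc (integrable_const _), integral_sub hIa hIb,
      integral_const_mul, integral_const_mul, integral_const]
    simp only [Measure.real, measure_univ, ENNReal.toReal_one, smul_eq_mul, one_mul]
    ring
  -- part 1
  have hpart1 : Tendsto (fun n : ℕ => ∫ ω, ((1/(n:ℝ)) * S n ω - σ2 * Sig j j')^2 ∂μ)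
      atTop (nhds 0) := by
    have hf0 : ∀ n : ℕ, 0 ≤ ∫ ω, ((1/(n:ℝ)) * S n ω - σ2 * Sig j j')^2 ∂μ :=
      fun n => integral_nonneg fun ω => sq_nonneg _
    have hfg : ∀ n : ℕ, (∫ ω, ((1/(n:ℝ)) * S n ω - σ2 * Sig j j')^2 ∂μ)
        ≤ (1/(n:ℝ))^2 * ((c3 + σ2^2) * (2*c4^4*n + 2*c4^4 * odA n))
          + ((1/(n:ℝ)) * (σ2 * ∑ i, X n i j * X n i j') - σ2 * Sig j j')^2 := by
      intro n
      rw [key n]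
      refine add_le_add (mul_le_mul_of_nonneg_left (hvarb n) (sq_nonneg _)) ?_
      rw [hmeanS n]
    have hgto : Tendsto (fun n : ℕ => (1/(n:ℝ))^2 * ((c3 + σ2^2) * (2*c4^4*n + 2*c4^4 * odA n))
        + ((1/(n:ℝ)) * (σ2 * ∑ i, X n i j * X n i j') - σ2 * Sig j j')^2)
        atTop (nhds 0) := by
      have hsplit : (fun n : ℕ => (1/(n:ℝ))^2 * ((c3 + σ2^2) * (2*c4^4*n + 2*c4^4 * odA n))
          + ((1/(n:ℝ)) * (σ2 * ∑ i, X n i j * X n i j') - σ2 * Sig j j')^2)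
          = fun n : ℕ => (((c3+σ2^2) * (2*c4^4)) * ((n:ℝ)/(n:ℝ)^2)
            + ((c3+σ2^2) * (2*c4^4)) * ((1/(n:ℝ)^2) * odA n))
            + (σ2 * ((1/(n:ℝ)) * ∑ i, X n i j * X n i j') - σ2 * Sig j j')^2 := by
        funext n; ring
      rw [hsplit]
      have t1 : Tendsto (fun n : ℕ => ((c3+σ2^2) * (2*c4^4)) * ((n:ℝ)/(n:ℝ)^2))
          atTop (nhds 0) := by
        have h0 : Tendsto (fun n : ℕ => (n:ℝ)/(n:ℝ)^2) atTop (nhds 0) := by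
          apply tendsto_one_div_atTop_nhds_zero_nat.congr'
          filter_upwards [eventually_ge_atTop 1] with n hn
          have hne : (n:ℝ) ≠ 0 := Nat.cast_ne_zero.mpr (by omega)
          field_simp
        simpa using h0.const_mul ((c3+σ2^2) * (2*c4^4))
      have t2 : Tendsto (fun n : ℕ => ((c3+σ2^2) * (2*c4^4)) * ((1/(n:ℝ)^2) * odA n))
          atTop (nhds 0) := by
        simpa using hAoff.const_mul ((c3+σ2^2) * (2*c4^4))
      have t3 : Tendsto (fun n : ℕ =>
          (σ2 * ((1/(n:ℝ)) * ∑ i, X n i j * X n i j') - σ2 * Sig j j')^2)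
          atTop (nhds 0) := by
        have h1 := (((hXX j j').const_mul σ2).sub_const (σ2 * Sig j j')).pow 2
        simpa using h1
      simpa using (t1.add t2).add t3
    exact squeeze_zero hf0 hfg hgto
  constructor
  · have : (fun n : ℕ => ∫ ω, ((1 / (n : ℝ)) * (∑ i : Fin n, ∑ i' : Fin n,
        X n i j * (A n i i' * ε n i ω * ε n i' ω) * X n i' j') - σ2 * Sig j j') ^ 2 ∂μ)
        = fun n : ℕ => ∫ ω, ((1/(n:ℝ)) * S n ω - σ2 * Sig j j')^2 ∂μ := by
      funext n; congr 1; funext ω; rw [hrw]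
    rw [this]; exact hpart1
  · intro δ hδ
    have hZ2int : ∀ n : ℕ, Integrable (fun ω => ((1/(n:ℝ)) * S n ω - σ2 * Sig j j')^2) μ := by
      intro n
      have hZ : MemLp (fun ω => (1/(n:ℝ)) * S n ω - σ2 * Sig j j') 2 μ :=
        MemLp.sub ((hSmem n).const_mul _) (memLp_const _)
      have h1 := my_memLp_mul hZ hZ h12
      have h2 := memLp_one_iff_integrable.mp h1
      exact h2.congr (Eventually.of_forall fun ω => (pow_two _).symm)
    have hmark : ∀ n : ℕ, μ {ω | δ ≤ |(1/(n:ℝ)) * S n ω - σ2 * Sig j j'|}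
        ≤ ENNReal.ofReal ((1/δ^2) * ∫ ω, ((1/(n:ℝ)) * S n ω - σ2 * Sig j j')^2 ∂μ) := by
      intro n
      have hsub : {ω | δ ≤ |(1/(n:ℝ)) * S n ω - σ2 * Sig j j'|}
          ⊆ {ω | δ^2 ≤ ((1/(n:ℝ)) * S n ω - σ2 * Sig j j')^2} := by
        intro ω hω
        simp only [Set.mem_setOf_eq] at hω ⊢
        nlinarith [abs_nonneg ((1/(n:ℝ)) * S n ω - σ2 * Sig j j'),
          sq_abs ((1/(n:ℝ)) * S n ω - σ2 * Sig j j')]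
      have h2 := mul_meas_ge_le_integral_of_nonneg
        (ae_of_all μ (fun ω => sq_nonneg ((1/(n:ℝ)) * S n ω - σ2 * Sig j j')))
        (hZ2int n) (δ^2)
      have h4 : (μ {ω | δ ≤ |(1/(n:ℝ)) * S n ω - σ2 * Sig j j'|}).toReal
          ≤ (μ {ω | δ^2 ≤ ((1/(n:ℝ)) * S n ω - σ2 * Sig j j')^2}).toReal :=
        ENNReal.toReal_mono (measure_ne_top μ _) (measure_mono hsub)
      have h3 : (μ {ω | δ ≤ |(1/(n:ℝ)) * S n ω - σ2 * Sig j j'|}).toReal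
          ≤ (1/δ^2) * ∫ ω, ((1/(n:ℝ)) * S n ω - σ2 * Sig j j')^2 ∂μ := by
        have h5 := mul_le_mul_of_nonneg_left h2 (le_of_lt (by positivity : (0:ℝ) < 1/δ^2))
        have h6 : (1/δ^2) * (δ^2 * (μ {ω | δ^2 ≤ ((1/(n:ℝ)) * S n ω - σ2 * Sig j j')^2}).toReal)
            = (μ {ω | δ^2 ≤ ((1/(n:ℝ)) * S n ω - σ2 * Sig j j')^2}).toReal := by
          field_simp
        simp only [Measure.real] at h5
        rw [h6] at h5
        linarith [h4, h5]
      calc μ {ω | δ ≤ |(1/(n:ℝ)) * S n ω - σ2 * Sig j j'|}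
          = ENNReal.ofReal ((μ {ω | δ ≤ |(1/(n:ℝ)) * S n ω - σ2 * Sig j j'|}).toReal) :=
            (ENNReal.ofReal_toReal (measure_ne_top μ _)).symm
        _ ≤ _ := ENNReal.ofReal_le_ofReal h3
    have hupper : Tendsto (fun n : ℕ => ENNReal.ofReal
        ((1/δ^2) * ∫ ω, ((1/(n:ℝ)) * S n ω - σ2 * Sig j j')^2 ∂μ)) atTop (nhds 0) := by
      have h1 : Tendsto (fun n : ℕ =>
          (1/δ^2) * ∫ ω, ((1/(n:ℝ)) * S n ω - σ2 * Sig j j')^2 ∂μ) atTop (nhds 0) := by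
        have := hpart1.const_mul (1/δ^2)
        rw [mul_zero] at this
        exact this
      have h2 := (ENNReal.continuous_ofReal.tendsto 0).comp h1
      rw [ENNReal.ofReal_zero] at h2
      exact h2
    have hgoal : Tendsto (fun n : ℕ => μ {ω | δ ≤ |(1/(n:ℝ)) * S n ω - σ2 * Sig j j'|})
        atTop (nhds 0) :=
      tendsto_of_tendsto_of_tendsto_of_le_of_le tendsto_const_nhds hupper
        (fun n => zero_le) (fun n => hmark n)
    have hseteq : (fun n : ℕ => μ {ω | δ ≤ |(1 / (n : ℝ)) * (∑ i : Fin n, ∑ i' : Fin n,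
        X n i j * (A n i i' * ε n i ω * ε n i' ω) * X n i' j') - σ2 * Sig j j'|})
        = fun n : ℕ => μ {ω | δ ≤ |(1/(n:ℝ)) * S n ω - σ2 * Sig j j'|} := by
      funext n
      congr 1
      ext ω
      simp only [Set.mem_setOf_eq, hrw]
    rw [hseteq]
    exact hgoal
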